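/- Let N be a set, k : N → ℤ a function x ↦ k_x, and k(·,·) : N × N → ℤ symmetric with k(x,y) ≥ max{k_x, k_y}, k(x,x) = k_x, and k(x,z) ≤ max{k(x,y), k(y,z)} for all x,y,z. Then ρ(x,y) := 2k(x,y) − k_x − k_y defines a metric on N satisfying the four-point condition ρ(w,x) + ρ(y,z) ≤ max{ρ(w,y) + ρ(x,z), ρ(w,z) + ρ(x,y)} (i.e., ρ is 0-hyperbolic). -/
import Mathlib


/-- From data `k_x` and a symmetric `k(·,·)` with `k(x,y) ≥ max{k_x,k_y}`,
`k(x,x) = k_x`, and the ultrametric-type inequality, the quantity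
`ρ(x,y) = 2k(x,y) − k_x − k_y` defines a metric satisfying the four-point
(0-hyperbolicity) condition. -/
theorem stmt_10 {N : Type*} (kb : N → ℤ) (k : N → N → ℤ)
    (hsymm : ∀ x y : N, k x y = k y x)
    (hge : ∀ x y : N, max (kb x) (kb y) ≤ k x y)
    (hdiag : ∀ x : N, k x x = kb x)
    (hultra : ∀ x y z : N, k x z ≤ max (k x y) (k y z))
    (hpos : ∀ x y : N, x ≠ y → 0 < 2 * k x y - kb x - kb y) :
    let ρ : N → N → ℤ := fun x y => 2 * k x y - kb x - kb y
    (∀ x : N, ρ x x = 0) ∧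
    (∀ x y : N, 0 ≤ ρ x y) ∧
    (∀ x y : N, ρ x y = ρ y x) ∧
    (∀ x y z : N, ρ x z ≤ ρ x y + ρ y z) ∧
    (∀ w x y z : N, ρ w x + ρ y z ≤ max (ρ w y + ρ x z) (ρ w z + ρ x y)) := by
  intro ρ
  refine ⟨?_, ?_, ?_, ?_, ?_⟩
  · intro x
    simp only [ρ, hdiag]
    ring
  · intro x y
    have h := hge x y
    rw [max_le_iff] at h
    simp only [ρ]
    omega
  · intro x y
    simp only [ρ, hsymm x y]
    ring
  · intro x y z
    have h1 := hultra x y z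
    have h2 := hge x y
    have h3 := hge y z
    rw [le_max_iff] at h1
    rw [max_le_iff] at h2 h3
    simp only [ρ]
    omega
  · intro w x y z
    have h1 := hultra w y x
    have h2 := hultra w z x
    have h3 := hultra y x z
    have h4 := hultra y w z
    have e1 := hsymm y x
    have e2 := hsymm z x
    have e3 := hsymm y w
    have e4 := hsymm z w
    rw [le_max_iff] at h1 h2 h3 h4
    simp only [ρ]
    rw [le_max_iff]
    omega
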